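/- Fix T > 0 and an integer n ≥ 2. Let V : [0,∞)×[0,1] → ℝ be continuous with continuous partial derivatives ∂V/∂t and ∂²V/∂x², with V(t,0) = V(t,1) = 0 and V(0,·) nonnegative. Let (Zⁿ, ηⁿ) be the solution of the Skorohod-type problem with data Vⁿ(t) := (V(t, 1/n), …, V(t, (n-1)/n)). Then each component ηⁿ_k is absolutely continuous on [0,T] with derivative η̇ⁿ_k ∈ L²([0,T]), and there exists a constant C, depending on T and on sup_{0 ≤ t ≤ T, 0 ≤ z ≤ 1} |∂²V(t,z)/∂z²| but not on n, such that ∫₀ᵀ Σ_{k=1}^{n-1} (η̇ⁿ_k(t))² dt ≤ C·( ∫₀ᵀ Σ_{k=1}^{n-1} (∂V/∂t(t, k/n))² dt + n ). -/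

import Mathlib

open MeasureTheory

open MeasureTheory

/-- The `(n-1) × (n-1)` tridiagonal matrix `Aⁿ` with `-2` on the diagonal and
`1` on the sub/super-diagonals. -/
def An (n : ℕ) : Matrix (Fin (n-1)) (Fin (n-1)) ℝ :=
  Matrix.of fun k i => if k = i then -2 else if |(k : ℤ) - (i : ℤ)| = 1 then 1 else 0

/-- `(Z, η)` is a solution of the Skorohod-type problem
`dZ(t) = n²AⁿZ(t)dt + dη(t)`, `Z(t) ≥ -V(t)`, `∫₀ᵗ ⟨Z+V, dη⟩ = 0` with data `V`:
`Z` is continuous with `Z_i(t) ≥ -V_i(t)`; each `η_i` is a continuous nondecreasing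
(Stieltjes) function with `η_i(0) = 0`; `Z(t) = ∫₀ᵗ n²AⁿZ(s) ds + η(t)`; and
`Σ_i ∫_{[0,t]} (Z_i(s) + V_i(s)) dη_i(s) = 0` (Lebesgue–Stieltjes integrals). -/
def IsSkorohodSolution (n : ℕ) (V : ℝ → Fin (n-1) → ℝ)
    (Z : ℝ → Fin (n-1) → ℝ) (η : Fin (n-1) → StieltjesFunction ℝ) : Prop :=
  ContinuousOn Z (Set.Ici 0) ∧
  (∀ t ≥ (0:ℝ), ∀ i, Z t i ≥ -V t i) ∧
  (∀ i, Continuous (η i)) ∧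
  (∀ i, η i 0 = 0) ∧
  (∀ t ≥ (0:ℝ), ∀ i,
    Z t i = (∫ s in (0:ℝ)..t, (n : ℝ)^2 * (An n).mulVec (Z s) i) + η i t) ∧
  (∀ t ≥ (0:ℝ),
    ∑ i, ∫ s in Set.Icc (0:ℝ) t, (Z s i + V s i) ∂((η i).measure) = 0)

section Aux

open Set Filter Topology

/-- Extension of `v` by zero, in 1-based indexing: `extZ n v m = v_{m}` for `1 ≤ m ≤ n-1`. -/
def extZ (n : ℕ) (v : Fin (n-1) → ℝ) (m : ℕ) : ℝ :=
  if h : 1 ≤ m ∧ m ≤ n-1 then v ⟨m-1, by omega⟩ else 0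

lemma extZ_pos (n : ℕ) (v : Fin (n-1) → ℝ) (m : ℕ) (h1 : 1 ≤ m) (h2 : m ≤ n-1)
    (h : m - 1 < n - 1) : extZ n v m = v ⟨m-1, h⟩ := dif_pos ⟨h1, h2⟩

lemma extZ_zero (n : ℕ) (v : Fin (n-1) → ℝ) (m : ℕ) (h : ¬(1 ≤ m ∧ m ≤ n-1)) :
    extZ n v m = 0 := dif_neg h

lemma an_mulVec (n : ℕ) (v : Fin (n-1) → ℝ) (k : Fin (n-1)) :
    (An n).mulVec v k = extZ n v (k : ℕ) - 2 * v k + extZ n v ((k : ℕ) + 2) := by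
  have hsum : (An n).mulVec v k =
      ∑ j : Fin (n-1), ((if j = k then (-2) * v j else 0)
        + ((if ((j:ℕ) + 1 = (k:ℕ)) then v j else 0)
          + (if ((j:ℕ) = (k:ℕ) + 1) then v j else 0))) := by
    simp only [Matrix.mulVec, dotProduct, An, Matrix.of_apply]
    apply Finset.sum_congr rfl
    intro j _
    by_cases h1 : k = j
    · subst h1
      simp
    · rw [if_neg h1]
      have h1' : j ≠ k := fun h => h1 h.symm
      have h1'' : (j:ℕ) ≠ (k:ℕ) := fun h => h1' (Fin.ext h)
      by_cases h2 : |(k : ℤ) - (j : ℤ)| = 1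
      · rw [if_pos h2]
        rcases (abs_eq (by norm_num : (0:ℤ) ≤ 1)).1 h2 with h3 | h3
        · have h4 : (j:ℕ) + 1 = (k:ℕ) := by omega
          have h5 : ¬ ((j:ℕ) = (k:ℕ) + 1) := by omega
          rw [if_neg h1', if_pos h4, if_neg h5]; ring
        · have h4 : ¬ ((j:ℕ) + 1 = (k:ℕ)) := by omega
          have h5 : (j:ℕ) = (k:ℕ) + 1 := by omega
          rw [if_neg h1', if_neg h4, if_pos h5]; ring
      · rw [if_neg h2]
        have h4 : ¬ ((j:ℕ) + 1 = (k:ℕ)) := by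
          intro h; exact h2 (by rw [abs_eq (by norm_num : (0:ℤ) ≤ 1)]; left; omega)
        have h5 : ¬ ((j:ℕ) = (k:ℕ) + 1) := by
          intro h; exact h2 (by rw [abs_eq (by norm_num : (0:ℤ) ≤ 1)]; right; omega)
        rw [if_neg h1', if_neg h4, if_neg h5]; ring
  rw [hsum, Finset.sum_add_distrib, Finset.sum_add_distrib]
  have S1 : ∑ j : Fin (n-1), (if j = k then (-2) * v j else 0) = -2 * v k := by
    simp
  have S2 : ∑ j : Fin (n-1), (if ((j:ℕ) + 1 = (k:ℕ)) then v j else 0) = extZ n v (k : ℕ) := by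
    by_cases hk : (k:ℕ) = 0
    · rw [Finset.sum_eq_zero (fun j _ => if_neg (by omega))]
      rw [extZ_zero n v _ (by omega)]
    · have hklt : (k : ℕ) < n - 1 := k.isLt
      have hk1 : (k:ℕ) - 1 < n - 1 := by omega
      have hcond : ∀ j : Fin (n-1), ((j:ℕ) + 1 = (k:ℕ)) ↔ j = ⟨(k:ℕ)-1, hk1⟩ := by
        intro j; rw [Fin.ext_iff]; simp; omega
      calc ∑ j : Fin (n-1), (if ((j:ℕ) + 1 = (k:ℕ)) then v j else 0)
          = ∑ j : Fin (n-1), (if j = ⟨(k:ℕ)-1, hk1⟩ then v j else 0) :=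
            Finset.sum_congr rfl (fun j _ => by simp only [hcond])
        _ = v ⟨(k:ℕ)-1, hk1⟩ := by simp
        _ = extZ n v (k : ℕ) := (extZ_pos n v _ (by omega) (by omega) hk1).symm
  have S3 : ∑ j : Fin (n-1), (if ((j:ℕ) = (k:ℕ) + 1) then v j else 0)
      = extZ n v ((k : ℕ) + 2) := by
    by_cases hk : (k:ℕ) + 1 < n - 1
    · have hcond : ∀ j : Fin (n-1), ((j:ℕ) = (k:ℕ) + 1) ↔ j = ⟨(k:ℕ)+1, hk⟩ := by
        intro j; rw [Fin.ext_iff]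
      calc ∑ j : Fin (n-1), (if ((j:ℕ) = (k:ℕ) + 1) then v j else 0)
          = ∑ j : Fin (n-1), (if j = ⟨(k:ℕ)+1, hk⟩ then v j else 0) :=
            Finset.sum_congr rfl (fun j _ => by simp only [hcond])
        _ = v ⟨(k:ℕ)+1, hk⟩ := by simp
        _ = extZ n v ((k : ℕ) + 2) := by
            rw [extZ_pos n v _ (by omega) (by omega) (by omega)]
            exact congrArg v (Fin.ext (by simp))
    · rw [Finset.sum_eq_zero (fun j _ => if_neg (by have := j.isLt; omega))]
      rw [extZ_zero n v _ (by omega)]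
  rw [S1, S2, S3]; ring

lemma an_mulVec_mono (n : ℕ) (v w : Fin (n-1) → ℝ) (k : Fin (n-1))
    (hle : ∀ j, w j ≤ v j) (hk : v k = w k) :
    (An n).mulVec w k ≤ (An n).mulVec v k := by
  simp only [Matrix.mulVec, dotProduct]
  apply Finset.sum_le_sum
  intro j _
  by_cases h : k = j
  · subst h; rw [hk]
  · have hA : 0 ≤ An n k j := by
      unfold An; simp only [Matrix.of_apply]; rw [if_neg h]
      split <;> norm_num
    exact mul_le_mul_of_nonneg_left (hle j) hA

lemma stieltjes_cont_singleton (η : StieltjesFunction ℝ) (hc : Continuous η) (a : ℝ) :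
    η.measure {a} = 0 := by
  rw [StieltjesFunction.measure_singleton]
  have hne : (𝓝[<] a) ≠ ⊥ := (inferInstance : Filter.NeBot (𝓝[<] a)).ne
  have : Function.leftLim η a = η a :=
    leftLim_eq_of_tendsto ((hc.tendsto a).mono_left nhdsWithin_le_nhds)
  rw [this, sub_self, ENNReal.ofReal_zero]

lemma sk_step {W G : ℝ → ℝ} {η : StieltjesFunction ℝ} {T L ε δ : ℝ}
    (hL : 0 ≤ L) (hε : 0 < ε) (hδ : 0 < δ)
    (hWc : ContinuousOn W (Icc 0 T)) (hG : ContinuousOn G (Icc 0 T))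
    (hinc : ∀ a ∈ Icc (0:ℝ) T, ∀ b ∈ Icc (0:ℝ) T, a ≤ b →
      η b - η a = (W b - W a) - ∫ s in a..b, G s)
    (hηc : Continuous η)
    (hsupp : η.measure {u | u ∈ Icc (0:ℝ) T ∧ W u ≠ 0} = 0)
    (hGL : ∀ u ∈ Icc (0:ℝ) T, W u = 0 → -L ≤ G u)
    (hGuc : ∀ u ∈ Icc (0:ℝ) T, ∀ v ∈ Icc (0:ℝ) T, |u - v| ≤ δ → |G u - G v| ≤ ε) :
    ∀ p ∈ Icc (0:ℝ) T, ∀ q ∈ Icc (0:ℝ) T, p ≤ q → q - p ≤ δ →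
      η q - η p ≤ (L + ε) * (q - p) := by
  intro p hp q hq hpq hqp
  have hLε : (0:ℝ) ≤ L + ε := by linarith
  set K : Set ℝ := {u | u ∈ Icc p q ∧ W u = 0} with hKdef
  by_cases hK : K.Nonempty
  · obtain ⟨u0, hu0⟩ := hK
    have hIccsub : Icc p q ⊆ Icc (0:ℝ) T := Icc_subset_Icc hp.1 hq.2
    have hKc : IsClosed K := by
      have : K = Icc p q ∩ W ⁻¹' {0} := by
        ext u; simp [hKdef]
      rw [this]
      exact (hWc.mono hIccsub).preimage_isClosed_of_isClosed isClosed_Icc isClosed_singleton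
    have hKbdd : BddBelow K := ⟨p, fun x hx => hx.1.1⟩
    have hKbdd' : BddAbove K := ⟨q, fun x hx => hx.1.2⟩
    set a := sInf K with ha
    set b := sSup K with hb
    have haK : a ∈ K := hKc.csInf_mem ⟨u0, hu0⟩ hKbdd
    have hbK : b ∈ K := hKc.csSup_mem ⟨u0, hu0⟩ hKbdd'
    have hpa : p ≤ a := haK.1.1
    have hbq : b ≤ q := hbK.1.2
    have hab : a ≤ b := le_trans (csInf_le hKbdd hu0) (le_csSup hKbdd' hu0)
    have haI : a ∈ Icc (0:ℝ) T := hIccsub haK.1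
    have hbI : b ∈ Icc (0:ℝ) T := hIccsub hbK.1
    have h1 : η a - η p ≤ 0 := by
      rcases eq_or_lt_of_le hpa with h | h
      · rw [← h]; simp
      · have hIoo : η.measure (Ioo p a) = 0 := by
          refine measure_mono_null ?_ hsupp
          intro u hu
          refine ⟨hIccsub ⟨hu.1.le, le_trans hu.2.le (le_trans hab hbq)⟩, fun hW => ?_⟩
          exact absurd (csInf_le hKbdd ⟨⟨hu.1.le, le_trans hu.2.le (le_trans hab hbq)⟩, hW⟩)
            (not_le.mpr hu.2)
        have h0 : η.measure (Ioc p a) = 0 := by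
          rw [← Ioo_union_Icc_eq_Ioc h le_rfl, Icc_self]
          refine le_antisymm (le_trans (measure_union_le _ _) ?_) (by simp)
          rw [hIoo, stieltjes_cont_singleton η hηc a, add_zero]
        rw [StieltjesFunction.measure_Ioc] at h0
        exact ENNReal.ofReal_eq_zero.mp h0
    have h3 : η q - η b ≤ 0 := by
      rcases eq_or_lt_of_le hbq with h | h
      · rw [h]; simp
      · have h0 : η.measure (Ioc b q) = 0 := by
          refine measure_mono_null ?_ hsupp
          intro u hu
          refine ⟨hIccsub ⟨le_trans hpa (le_trans hab hu.1.le), hu.2⟩, fun hW => ?_⟩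
          exact absurd (le_csSup hKbdd' ⟨⟨le_trans hpa (le_trans hab hu.1.le), hu.2⟩, hW⟩)
            (not_le.mpr hu.1)
        rw [StieltjesFunction.measure_Ioc] at h0
        exact ENNReal.ofReal_eq_zero.mp h0
    have h2 : η b - η a ≤ (L + ε) * (b - a) := by
      have heq := hinc a haI b hbI hab
      rw [haK.2, hbK.2] at heq
      have hGint : IntervalIntegrable G volume a b := by
        apply ContinuousOn.intervalIntegrable
        rw [uIcc_of_le hab]
        exact hG.mono (Icc_subset_Icc haI.1 hbI.2)
      have hlow : ∀ u ∈ Icc a b, -(L + ε) ≤ G u := by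
        intro u hu
        have huI : u ∈ Icc (0:ℝ) T := ⟨le_trans haI.1 hu.1, le_trans hu.2 hbI.2⟩
        have hud : |u - a| ≤ δ := by
          rw [abs_of_nonneg (sub_nonneg.mpr hu.1)]
          have : b - a ≤ q - p := by linarith
          linarith [hu.2]
        have h5 := hGuc u huI a haI hud
        have h6 := hGL a haI haK.2
        have := abs_le.mp h5
        linarith [this.1]
      have hlow' : (∫ s in a..b, (-(L + ε)) ) ≤ ∫ s in a..b, G s :=
        intervalIntegral.integral_mono_on hab intervalIntegrable_const hGint hlow
      rw [intervalIntegral.integral_const, smul_eq_mul] at hlow'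
      linarith
    have hbaqp : b - a ≤ q - p := by linarith
    have := mul_le_mul_of_nonneg_left hbaqp hLε
    linarith
  · have hsub : Ioc p q ⊆ {u | u ∈ Icc (0:ℝ) T ∧ W u ≠ 0} := by
      intro u hu
      refine ⟨⟨le_trans hp.1 hu.1.le, le_trans hu.2 hq.2⟩, fun hW => ?_⟩
      exact hK ⟨u, ⟨⟨hu.1.le, hu.2⟩, hW⟩⟩
    have h0 : η.measure (Ioc p q) = 0 := measure_mono_null hsub hsupp
    rw [StieltjesFunction.measure_Ioc] at h0
    have := ENNReal.ofReal_eq_zero.mp h0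
    nlinarith [mul_nonneg hLε (sub_nonneg.mpr hpq)]

lemma sk_lip {W G : ℝ → ℝ} {η : StieltjesFunction ℝ} {T L : ℝ}
    (hL : 0 ≤ L)
    (hWc : ContinuousOn W (Icc 0 T)) (hG : ContinuousOn G (Icc 0 T))
    (hinc : ∀ a ∈ Icc (0:ℝ) T, ∀ b ∈ Icc (0:ℝ) T, a ≤ b →
      η b - η a = (W b - W a) - ∫ s in a..b, G s)
    (hηc : Continuous η)
    (hsupp : η.measure {u | u ∈ Icc (0:ℝ) T ∧ W u ≠ 0} = 0)
    (hGL : ∀ u ∈ Icc (0:ℝ) T, W u = 0 → -L ≤ G u) :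
    ∀ s ∈ Icc (0:ℝ) T, ∀ t ∈ Icc (0:ℝ) T, s ≤ t → η t - η s ≤ L * (t - s) := by
  intro s hs t ht hst
  rcases eq_or_lt_of_le hst with h | hlt
  · rw [← h]; simp
  have key : ∀ ε > (0:ℝ), η t - η s ≤ (L + ε) * (t - s) := by
    intro ε hε
    have hGucU : UniformContinuousOn G (Icc 0 T) :=
      isCompact_Icc.uniformContinuousOn_of_continuous hG
    obtain ⟨δ, hδ, hδG⟩ := Metric.uniformContinuousOn_iff_le.mp hGucU ε hε
    have hGuc : ∀ u ∈ Icc (0:ℝ) T, ∀ v ∈ Icc (0:ℝ) T, |u - v| ≤ δ → |G u - G v| ≤ ε := by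
      intro u hu v hv huv
      have := hδG u hu v hv (by rwa [Real.dist_eq])
      rwa [Real.dist_eq] at this
    obtain ⟨N, hN⟩ := exists_nat_gt ((t - s) / δ)
    have hN0 : 0 < (N:ℝ) := lt_of_le_of_lt (div_nonneg (by linarith) hδ.le) hN
    set d := (t - s) / N with hd
    have hd0 : 0 ≤ d := div_nonneg (by linarith) hN0.le
    have hdδ : d ≤ δ := by
      rw [hd, div_le_iff₀ hN0]
      rw [div_lt_iff₀ hδ] at hN
      linarith
    have hNd : (N:ℝ) * d = t - s := by
      rw [hd]; field_simp
    have hstep : ∀ j : ℕ, j ≤ N → η (s + j * d) - η s ≤ (L + ε) * ((j:ℝ) * d) := by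
      intro j
      induction j with
      | zero => intro _; simp
      | succ i ih =>
        intro hiN
        have hi := ih (by omega)
        have hiN' : (i:ℝ) * d ≤ (N:ℝ) * d :=
          mul_le_mul_of_nonneg_right (by exact_mod_cast Nat.cast_le.mpr (by omega)) hd0
        have hiN'' : ((i:ℝ)+1) * d ≤ (N:ℝ) * d :=
          mul_le_mul_of_nonneg_right (by exact_mod_cast Nat.cast_le.mpr hiN) hd0
        have hmem1 : s + (i:ℝ) * d ∈ Icc (0:ℝ) T := by
          constructor
          · have : 0 ≤ (i:ℝ) * d := mul_nonneg (Nat.cast_nonneg i) hd0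
            linarith [hs.1]
          · rw [hNd] at hiN'; linarith [ht.2]
        have hmem2 : s + ((i:ℝ)+1) * d ∈ Icc (0:ℝ) T := by
          constructor
          · have : 0 ≤ ((i:ℝ)+1) * d := mul_nonneg (by positivity) hd0
            linarith [hs.1]
          · rw [hNd] at hiN''; linarith [ht.2]
        have hle : s + (i:ℝ) * d ≤ s + ((i:ℝ)+1) * d := by nlinarith
        have hdiff : (s + ((i:ℝ)+1) * d) - (s + (i:ℝ) * d) ≤ δ := by
          rw [show (s + ((i:ℝ)+1) * d) - (s + (i:ℝ) * d) = d from by ring]; exact hdδ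
        have := sk_step hL hε hδ hWc hG hinc hηc hsupp hGL hGuc
          (s + (i:ℝ) * d) hmem1 (s + ((i:ℝ)+1) * d) hmem2 hle hdiff
        push_cast
        have harith : (s + ((i:ℝ)+1) * d) - (s + (i:ℝ) * d) = d := by ring
        rw [harith] at this
        have : η (s + ((i:ℝ)+1) * d) - η s ≤ (L + ε) * (((i:ℝ)+1) * d) := by
          have := add_le_add hi this
          calc η (s + ((i:ℝ)+1) * d) - η s
              = (η (s + (i:ℝ) * d) - η s) + (η (s + ((i:ℝ)+1) * d) - η (s + (i:ℝ) * d)) := by ring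
            _ ≤ (L + ε) * ((i:ℝ) * d) + (L + ε) * d := this
            _ = (L + ε) * (((i:ℝ)+1) * d) := by ring
        exact this
    have := hstep N le_rfl
    rw [hNd] at this
    have hts : s + (t - s) = t := by ring
    rw [hts] at this
    exact this
  by_contra hcon
  push_neg at hcon
  have hts : 0 < t - s := by linarith
  set ε := (η t - η s - L * (t - s)) / (2 * (t - s)) with hεdef
  have hε : 0 < ε := by
    apply div_pos
    · linarith
    · linarith
  have h2 := key ε hε
  rw [hεdef] at h2
  have : (η t - η s - L * (t - s)) / (2 * (t - s)) * (t - s) = (η t - η s - L * (t - s)) / 2 := by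
    field_simp
  nlinarith [this]

lemma lip_ftc {f : ℝ → ℝ} {L : ℝ} (hL : 0 ≤ L) (hmono : Monotone f) (hcont : Continuous f)
    (hlip : ∀ s t : ℝ, s ≤ t → f t - f s ≤ L * (t - s)) :
    ∃ g : ℝ → ℝ, Measurable g ∧ (∀ u, 0 ≤ g u ∧ g u ≤ L) ∧
      ∀ t : ℝ, 0 ≤ t → f t - f 0 = ∫ u in (0:ℝ)..t, g u := by
  refine ⟨deriv f, measurable_deriv f, ?_, ?_⟩
  · intro u
    by_cases hdiff : DifferentiableAt ℝ f u
    · have hd : HasDerivAt f (deriv f u) u := hdiff.hasDerivAt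
      have hslope := hasDerivAt_iff_tendsto_slope.mp hd
      have h1 : Tendsto (slope f u) (𝓝[>] u) (𝓝 (deriv f u)) :=
        hslope.mono_left (nhdsWithin_mono _ (fun y hy => ne_of_gt hy))
      constructor
      · refine ge_of_tendsto h1 ?_
        filter_upwards [self_mem_nhdsWithin] with y hy
        rw [slope_def_field]
        have : (0:ℝ) < y - u := sub_pos.mpr hy
        exact div_nonneg (sub_nonneg.mpr (hmono (le_of_lt hy))) this.le
      · refine le_of_tendsto h1 ?_
        filter_upwards [self_mem_nhdsWithin] with y hy
        rw [slope_def_field]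
        have hyu : (0:ℝ) < y - u := sub_pos.mpr hy
        rw [div_le_iff₀ hyu]
        exact hlip u y (le_of_lt hy)
    · rw [deriv_zero_of_not_differentiableAt hdiff]
      exact ⟨le_rfl, hL⟩
  · intro t ht
    have hfint : ∀ a b : ℝ, IntervalIntegrable f volume a b := fun a b =>
      hcont.intervalIntegrable a b
    have hI : ∀ a : ℝ, ∀ h : ℝ, 0 < h → |(∫ u in a..(a+h), f u) - h * f a| ≤ L * h^2 := by
      intro a h hh
      have heq : (∫ u in a..(a+h), f u) - h * f a = ∫ u in a..(a+h), (f u - f a) := by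
        rw [intervalIntegral.integral_sub (hfint a (a+h)) intervalIntegrable_const,
          intervalIntegral.integral_const]
        simp [smul_eq_mul]
      rw [heq]
      have hb : ∀ u ∈ Set.uIoc a (a+h), ‖f u - f a‖ ≤ L * h := by
        intro u hu
        rw [Set.uIoc_of_le (by linarith)] at hu
        rw [Real.norm_eq_abs, abs_of_nonneg (sub_nonneg.mpr (hmono hu.1.le))]
        calc f u - f a ≤ L * (u - a) := hlip a u hu.1.le
          _ ≤ L * h := mul_le_mul_of_nonneg_left (by linarith [hu.2]) hL
      calc |∫ u in a..(a+h), (f u - f a)| ≤ (L * h) * |(a+h) - a| :=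
            intervalIntegral.norm_integral_le_of_norm_le_const hb
        _ = L * h^2 := by rw [add_sub_cancel_left, abs_of_pos hh]; ring
    set F : ℕ → ℝ → ℝ := fun m u => (f (u + 1/(m+1)) - f u) / (1/(m+1)) with hF
    have hh : ∀ m : ℕ, (0:ℝ) < 1/(m+1) := fun m => by positivity
    have hFb : ∀ m u, |F m u| ≤ L := by
      intro m u
      rw [hF]
      simp only
      rw [abs_div, abs_of_pos (hh m), div_le_iff₀ (hh m),
        abs_of_nonneg (sub_nonneg.mpr (hmono (by linarith [hh m])))]
      calc f (u + 1/(m+1)) - f u ≤ L * ((u + 1/(m+1)) - u) := hlip _ _ (by linarith [hh m])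
        _ = L * (1/(m+1)) := by ring
    have hFc : ∀ m, Continuous (F m) :=
      fun m => ((hcont.comp (continuous_id.add continuous_const)).sub hcont).div_const _
    have hptw : ∀ u, DifferentiableAt ℝ f u →
        Tendsto (fun m => F m u) atTop (𝓝 (deriv f u)) := by
      intro u hdiff
      have hslope := hasDerivAt_iff_tendsto_slope.mp hdiff.hasDerivAt
      have hseq : Tendsto (fun m : ℕ => u + 1/(m+1)) atTop (𝓝[≠] u) := by
        rw [tendsto_nhdsWithin_iff]
        constructor
        · have : Tendsto (fun m : ℕ => 1/((m:ℝ)+1)) atTop (𝓝 0) :=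
            tendsto_one_div_add_atTop_nhds_zero_nat
          have := this.const_add u
          simpa using this
        · filter_upwards with m
          have := hh m
          simp only [Set.mem_compl_iff, Set.mem_singleton_iff]
          intro hC
          have : u + 1/((m:ℝ)+1) = u := hC
          linarith
      have hcomp := hslope.comp hseq
      have heq : ∀ m : ℕ, slope f u (u + 1/(m+1)) = F m u := by
        intro m
        have hsub : (u + 1/((m:ℝ)+1)) - u = 1/((m:ℝ)+1) := add_sub_cancel_left u _
        rw [slope_def_field, hsub, hF]
      refine Tendsto.congr (fun m => heq m) hcomp
    have hmeas : MeasurableSet (Ioc (0:ℝ) t) := measurableSet_Ioc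
    have hdom : Tendsto (fun m => ∫ u in Ioc (0:ℝ) t, F m u) atTop
        (𝓝 (∫ u in Ioc (0:ℝ) t, deriv f u)) := by
      apply MeasureTheory.tendsto_integral_of_dominated_convergence (fun _ => L)
      · exact fun m => ((hFc m).aestronglyMeasurable).restrict
      · exact integrableOn_const measure_Ioc_lt_top.ne
      · exact fun m => Filter.Eventually.of_forall (fun u => by
          rw [Real.norm_eq_abs]; exact hFb m u)
      · have := hmono.ae_differentiableAt
        exact ae_restrict_of_ae (this.mono (fun u hu => hptw u hu))
    have hcompute : ∀ m : ℕ, ∫ u in Ioc (0:ℝ) t, F m u =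
        ((∫ u in t..(t + 1/(m+1)), f u) - ∫ u in (0:ℝ)..(0 + 1/(m+1)), f u) / (1/(m+1)) := by
      intro m
      have h1 : ∫ u in Ioc (0:ℝ) t, F m u = ∫ u in (0:ℝ)..t, F m u :=
        (intervalIntegral.integral_of_le ht).symm
      rw [h1, hF]
      simp only
      rw [intervalIntegral.integral_div]
      congr 1
      have hc1 : Continuous fun u : ℝ => f (u + 1/((m:ℝ)+1)) :=
        hcont.comp (continuous_add_right _)
      rw [intervalIntegral.integral_sub (hc1.intervalIntegrable _ _) (hfint 0 t)]
      have h2 : (∫ u in (0:ℝ)..t, f (u + 1/(m+1))) = ∫ u in (0+1/(m+1))..(t+1/(m+1)), f u := by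
        exact intervalIntegral.integral_comp_add_right f _
      rw [h2]
      have h3 : (∫ u in (0+1/(m+1))..(t+1/(m+1)), f u) + (∫ u in (t+1/(m+1))..t, f u)
          = ∫ u in (0+1/(m+1))..t, f u :=
        intervalIntegral.integral_add_adjacent_intervals (hfint _ _) (hfint _ _)
      have h4 : (∫ u in (0:ℝ)..(0+1/(m+1)), f u) + (∫ u in (0+1/(m+1))..t, f u)
          = ∫ u in (0:ℝ)..t, f u :=
        intervalIntegral.integral_add_adjacent_intervals (hfint _ _) (hfint _ _)
      have h5 : (∫ u in (t+1/(m+1))..t, f u) = - ∫ u in t..(t+1/(m+1)), f u :=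
        intervalIntegral.integral_symm t (t+1/(m+1))
      linarith [h3, h4, h5]
    have hlim2 : Tendsto (fun m : ℕ =>
        ((∫ u in t..(t + 1/(m+1)), f u) - ∫ u in (0:ℝ)..(0 + 1/(m+1)), f u) / (1/(m+1)))
        atTop (𝓝 (f t - f 0)) := by
      rw [tendsto_iff_dist_tendsto_zero]
      apply squeeze_zero (fun m => dist_nonneg) (g := fun m : ℕ => 2 * L * (1/(m+1)))
      · intro m
        rw [Real.dist_eq]
        have hhm := hh m
        have hA := hI t (1/(m+1)) hhm
        have hB := hI 0 (1/(m+1)) hhm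
        set X := ∫ u in t..(t + 1/((m:ℝ)+1)), f u with hX
        set Y := ∫ u in (0:ℝ)..(0 + 1/((m:ℝ)+1)), f u with hY
        have hrw : (X - Y) / (1/((m:ℝ)+1)) - (f t - f 0)
            = ((X - (1/((m:ℝ)+1)) * f t) - (Y - (1/((m:ℝ)+1)) * f 0)) / (1/((m:ℝ)+1)) := by
          field_simp
          ring
        rw [hrw, abs_div, abs_of_pos hhm, div_le_iff₀ hhm]
        calc |(X - (1/((m:ℝ)+1)) * f t) - (Y - (1/((m:ℝ)+1)) * f 0)|
            ≤ |X - (1/((m:ℝ)+1)) * f t| + |Y - (1/((m:ℝ)+1)) * f 0| := abs_sub _ _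
          _ ≤ L * (1/((m:ℝ)+1))^2 + L * (1/((m:ℝ)+1))^2 := add_le_add hA hB
          _ = 2 * L * (1/((m:ℝ)+1)) * (1/((m:ℝ)+1)) := by ring
      · have : Tendsto (fun m : ℕ => 1/((m:ℝ)+1)) atTop (𝓝 0) :=
          tendsto_one_div_add_atTop_nhds_zero_nat
        have := this.const_mul (2*L)
        simpa using this
    have := tendsto_nhds_unique (hdom.congr (fun m => hcompute m)) hlim2
    rw [intervalIntegral.integral_of_le ht]
    linarith [this]

lemma secdiff_bound {V Vx Vxx : ℝ → ℝ → ℝ} {T M : ℝ}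
    (hVx : ∀ t x, HasDerivAt (fun y => V t y) (Vx t x) x)
    (hVxx : ∀ t x, HasDerivAt (fun y => Vx t y) (Vxx t x) x)
    (hM : ∀ u ∈ Icc (0:ℝ) T, ∀ z ∈ Icc (0:ℝ) 1, |Vxx u z| ≤ M)
    {u x h : ℝ} (hu : u ∈ Icc (0:ℝ) T) (hh : 0 < h) (h1 : 0 ≤ x - h) (h2 : x + h ≤ 1) :
    |V u (x-h) - 2 * V u x + V u (x+h)| ≤ M * h^2 := by
  set g : ℝ → ℝ := fun y => V u (y+h) - V u y with hg
  have hg' : ∀ y, HasDerivAt g (Vx u (y+h) - Vx u y) y := by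
    intro y
    have h1' : HasDerivAt (fun y => V u (y+h)) (Vx u (y+h)) y := by
      have := (hVx u (y+h)).comp y ((hasDerivAt_id y).add_const h)
      simpa [Function.comp_def] using this
    exact h1'.sub (hVx u y)
  have hxh : x - h < x := by linarith
  obtain ⟨ξ, hξ, hξeq⟩ := exists_hasDerivAt_eq_slope g (fun y => Vx u (y+h) - Vx u y) hxh
    (fun y _ => (hg' y).continuousAt.continuousWithinAt) (fun y _ => hg' y)
  have hξh : ξ < ξ + h := by linarith
  obtain ⟨ζ, hζ, hζeq⟩ := exists_hasDerivAt_eq_slope (fun y => Vx u y) (fun y => Vxx u y) hξh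
    (fun y _ => (hVxx u y).continuousAt.continuousWithinAt) (fun y _ => hVxx u y)
  have e1 : g x - g (x-h) = V u (x-h) - 2 * V u x + V u (x+h) := by
    rw [hg]; simp only; rw [sub_add_cancel]; ring
  have e2 : Vx u (ξ+h) - Vx u ξ = (g x - g (x-h)) / h := by
    rw [hξeq]; congr 1; ring
  have e3 : Vxx u ζ = (Vx u (ξ+h) - Vx u ξ) / h := by
    rw [hζeq]; congr 1; ring_nf
  have hζI : ζ ∈ Icc (0:ℝ) 1 := by
    constructor
    · have := hζ.1; have := hξ.1; linarith
    · have := hζ.2; have := hξ.2; linarith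
  have hne : h ≠ 0 := ne_of_gt hh
  have s1 : Vxx u ζ * h = Vx u (ξ+h) - Vx u ξ := by
    rw [e3]; field_simp
  have s2 : Vxx u ζ * h * h = g x - g (x-h) := by
    rw [s1, e2]; field_simp
  have hfin : V u (x-h) - 2 * V u x + V u (x+h) = Vxx u ζ * h^2 := by
    rw [← e1, ← s2]; ring
  rw [hfin, abs_mul, abs_of_pos (by positivity : (0:ℝ) < h^2)]
  exact mul_le_mul_of_nonneg_right (hM u hu ζ hζI) (by positivity)

end Aux

theorem eta_absolutely_continuous_L2_bound
    (T : ℝ) (hT : 0 < T) (V Vt Vx Vxx : ℝ → ℝ → ℝ)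
    (hVc : Continuous fun p : ℝ × ℝ => V p.1 p.2)
    (hVt : ∀ t x, HasDerivAt (fun s => V s x) (Vt t x) t)
    (hVx : ∀ t x, HasDerivAt (fun y => V t y) (Vx t x) x)
    (hVxx : ∀ t x, HasDerivAt (fun y => Vx t y) (Vxx t x) x)
    (hVtc : Continuous fun p : ℝ × ℝ => Vt p.1 p.2)
    (hVxxc : Continuous fun p : ℝ × ℝ => Vxx p.1 p.2)
    (hVbd : ∀ t ≥ (0:ℝ), V t 0 = 0 ∧ V t 1 = 0)
    (hV0 : ∀ x ∈ Set.Icc (0:ℝ) 1, 0 ≤ V 0 x) :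
    ∃ C : ℝ, ∀ n : ℕ, 2 ≤ n →
      ∀ (Zn : ℝ → Fin (n-1) → ℝ) (ηn : Fin (n-1) → StieltjesFunction ℝ),
        IsSkorohodSolution n (fun t k => V t (((k : ℕ) + 1 : ℝ) / n)) Zn ηn →
        ∃ g : Fin (n-1) → ℝ → ℝ,
          (∀ k, IntegrableOn (g k) (Set.Icc 0 T)) ∧
          (∀ k, IntegrableOn (fun t => (g k t)^2) (Set.Icc 0 T)) ∧
          (∀ k, ∀ t ∈ Set.Icc (0:ℝ) T, ηn k t = ∫ s in (0:ℝ)..t, g k s) ∧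
          (∫ t in (0:ℝ)..T, ∑ k, (g k t)^2)
            ≤ C * ((∫ t in (0:ℝ)..T, ∑ k : Fin (n-1), (Vt t (((k : ℕ) + 1 : ℝ) / n))^2) + n) := by
  classical
  open Set Filter Topology in
  -- bounds on the compact box
  obtain ⟨M0, hM0⟩ := (isCompact_Icc.prod isCompact_Icc :
    IsCompact (Icc (0:ℝ) T ×ˢ Icc (0:ℝ) 1)).exists_bound_of_continuousOn hVxxc.continuousOn
  obtain ⟨Mt0, hMt0⟩ := (isCompact_Icc.prod isCompact_Icc :
    IsCompact (Icc (0:ℝ) T ×ˢ Icc (0:ℝ) 1)).exists_bound_of_continuousOn hVtc.continuousOn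
  set M₁ : ℝ := max M0 0 with hM₁
  set M₂ : ℝ := max Mt0 0 with hM₂
  have hM₁0 : 0 ≤ M₁ := le_max_right _ _
  have hM₂0 : 0 ≤ M₂ := le_max_right _ _
  have hMxx : ∀ u ∈ Icc (0:ℝ) T, ∀ z ∈ Icc (0:ℝ) 1, |Vxx u z| ≤ M₁ := by
    intro u hu z hz
    have := hM0 (u, z) (Set.mk_mem_prod hu hz)
    rw [Real.norm_eq_abs] at this
    exact le_trans this (le_max_left _ _)
  have hMt : ∀ u ∈ Icc (0:ℝ) T, ∀ z ∈ Icc (0:ℝ) 1, |Vt u z| ≤ M₂ := by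
    intro u hu z hz
    have := hMt0 (u, z) (Set.mk_mem_prod hu hz)
    rw [Real.norm_eq_abs] at this
    exact le_trans this (le_max_left _ _)
  set L : ℝ := M₁ + M₂ with hLdef
  have hL : 0 ≤ L := by positivity
  refine ⟨T * L^2 + 1, ?_⟩
  intro n hn Zn ηn hsol
  obtain ⟨hZc, hZV, hηc, hη0, heq, hcomp⟩ := hsol
  have hnR : (0:ℝ) < n := by positivity
  have hnR' : (n:ℝ) ≠ 0 := ne_of_gt hnR
  set x : Fin (n-1) → ℝ := fun k => ((k : ℕ) + 1 : ℝ) / n with hx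
  have hxIcc : ∀ k, x k ∈ Icc (0:ℝ) 1 := by
    intro k
    have hk : (k:ℕ) + 1 ≤ n := by have := k.isLt; omega
    constructor
    · positivity
    · rw [div_le_one hnR]
      exact_mod_cast hk
  set W : Fin (n-1) → ℝ → ℝ := fun k u => Zn u k + V u (x k) with hW
  set G : Fin (n-1) → ℝ → ℝ :=
    fun k u => (n:ℝ)^2 * (An n).mulVec (Zn u) k + Vt u (x k) with hG
  have hZck : ∀ k, ContinuousOn (fun u => Zn u k) (Set.Ici (0:ℝ)) :=
    fun k => (continuous_apply k).comp_continuousOn hZc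
  have hVcont : ∀ z : ℝ, Continuous (fun u => V u z) := by
    intro z
    exact hVc.comp (continuous_id.prodMk continuous_const)
  have hVtcont : ∀ z : ℝ, Continuous (fun u => Vt u z) := by
    intro z
    exact hVtc.comp (continuous_id.prodMk continuous_const)
  have hWc : ∀ k, ContinuousOn (W k) (Icc 0 T) := by
    intro k
    apply ContinuousOn.add
    · exact (hZck k).mono (fun u hu => hu.1)
    · exact (hVcont (x k)).continuousOn
  have hmvc : ∀ k, ContinuousOn (fun u => (An n).mulVec (Zn u) k) (Set.Ici (0:ℝ)) := by
    intro k
    have : (fun u => (An n).mulVec (Zn u) k) = fun u => ∑ j, An n k j * Zn u j := by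
      funext u
      rfl
    rw [this]
    apply continuousOn_finset_sum
    intro j _
    exact continuousOn_const.mul (hZck j)
  have hGc : ∀ k, ContinuousOn (G k) (Icc 0 T) := by
    intro k
    apply ContinuousOn.add
    · exact (continuousOn_const.mul ((hmvc k).mono (fun u hu => hu.1)))
    · exact (hVtcont (x k)).continuousOn
  -- increment identity
  have hmvint : ∀ k, ∀ a b : ℝ, 0 ≤ a → 0 ≤ b →
      IntervalIntegrable (fun s => (n:ℝ)^2 * (An n).mulVec (Zn s) k) volume a b := by
    intro k a b ha hb
    apply ContinuousOn.intervalIntegrable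
    apply (continuousOn_const.mul (hmvc k)).mono
    intro u hu
    rcases le_total a b with h | h
    · rw [Set.uIcc_of_le h] at hu; exact le_trans ha hu.1
    · rw [Set.uIcc_of_ge h] at hu; exact le_trans hb hu.1
  have hVtint : ∀ z : ℝ, ∀ a b : ℝ, IntervalIntegrable (fun s => Vt s z) volume a b :=
    fun z a b => (hVtcont z).intervalIntegrable a b
  have hVftc : ∀ z : ℝ, ∀ a b : ℝ, V b z - V a z = ∫ s in a..b, Vt s z := by
    intro z a b
    exact (intervalIntegral.integral_eq_sub_of_hasDerivAt (fun s _ => hVt s z)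
      (hVtint z a b)).symm
  have hinc : ∀ k, ∀ a ∈ Icc (0:ℝ) T, ∀ b ∈ Icc (0:ℝ) T, a ≤ b →
      ηn k b - ηn k a = (W k b - W k a) - ∫ s in a..b, G k s := by
    intro k a ha b hb hab
    have heqa := heq a ha.1 k
    have heqb := heq b hb.1 k
    have hsplit : (∫ s in a..b, G k s)
        = (∫ s in a..b, (n:ℝ)^2 * (An n).mulVec (Zn s) k) + ∫ s in a..b, Vt s (x k) := by
      rw [hG]
      exact intervalIntegral.integral_add (hmvint k a b ha.1 hb.1) (hVtint (x k) a b)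
    have hsub : (∫ s in (0:ℝ)..b, (n:ℝ)^2 * (An n).mulVec (Zn s) k)
        - (∫ s in (0:ℝ)..a, (n:ℝ)^2 * (An n).mulVec (Zn s) k)
        = ∫ s in a..b, (n:ℝ)^2 * (An n).mulVec (Zn s) k :=
      intervalIntegral.integral_interval_sub_left (hmvint k 0 b (le_refl 0) hb.1)
        (hmvint k 0 a (le_refl 0) ha.1)
    have hVab : V b (x k) - V a (x k) = ∫ s in a..b, Vt s (x k) := hVftc (x k) a b
    rw [hW]
    simp only
    rw [hsplit, ← hsub, ← hVab]
    rw [heqa, heqb]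
    ring
  -- support property
  have hsupp : ∀ k, (ηn k).measure {u | u ∈ Icc (0:ℝ) T ∧ W k u ≠ 0} = 0 := by
    intro k
    have hsum := hcomp T hT.le
    have hnonneg : ∀ i : Fin (n-1), 0 ≤ ∫ s in Icc (0:ℝ) T,
        (Zn s i + V s (((i : ℕ) + 1 : ℝ) / n)) ∂((ηn i).measure) := by
      intro i
      apply setIntegral_nonneg measurableSet_Icc
      intro s hs
      have := hZV s hs.1 i
      simp only at this
      linarith [this]
    have hzero : ∫ s in Icc (0:ℝ) T,
        (Zn s k + V s (((k : ℕ) + 1 : ℝ) / n)) ∂((ηn k).measure) = 0 := by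
      have := (Finset.sum_eq_zero_iff_of_nonneg
        (fun i _ => hnonneg i)).mp ?_ k (Finset.mem_univ k)
      · exact this
      · exact hsum
    have hintW : IntegrableOn (fun s => Zn s k + V s (((k : ℕ) + 1 : ℝ) / n)) (Icc 0 T)
        ((ηn k).measure) := by
      apply ContinuousOn.integrableOn_compact isCompact_Icc
      exact hWc k
    have hae : 0 ≤ᵐ[((ηn k).measure).restrict (Icc 0 T)]
        (fun s => Zn s k + V s (((k : ℕ) + 1 : ℝ) / n)) := by
      rw [Filter.EventuallyLE, ae_restrict_iff' measurableSet_Icc]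
      apply Filter.Eventually.of_forall
      intro s hs
      have := hZV s hs.1 k
      simp only at this
      simp only [Pi.zero_apply]
      linarith [this]
    have h0 := (setIntegral_eq_zero_iff_of_nonneg_ae hae hintW).mp hzero
    have h0' : ∀ᵐ s ∂(((ηn k).measure).restrict (Icc 0 T)), W k s = 0 := by
      filter_upwards [h0] with s hs
      exact hs
    rw [ae_iff] at h0'
    have := h0'
    rw [Measure.restrict_apply' measurableSet_Icc] at this
    have hseteq : {u | u ∈ Icc (0:ℝ) T ∧ W k u ≠ 0} = {a | ¬W k a = 0} ∩ Icc 0 T := by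
      ext u; constructor
      · intro hu; exact ⟨hu.2, hu.1⟩
      · intro hu; exact ⟨hu.2, hu.1⟩
    rw [hseteq]
    exact this
  -- lower bound for G on the contact set
  have hAVbound : ∀ u ∈ Icc (0:ℝ) T, ∀ k : Fin (n-1),
      |(n:ℝ)^2 * (An n).mulVec (fun j => V u (x j)) k| ≤ M₁ := by
    intro u hu k
    rw [an_mulVec]
    have hklt : (k:ℕ) < n - 1 := k.isLt
    have e1 : extZ n (fun j => V u (x j)) (k:ℕ) = V u ((k:ℕ)/n) := by
      by_cases hk : (k:ℕ) = 0
      · rw [extZ_zero n _ _ (by omega), hk]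
        simp only [Nat.cast_zero, zero_div]
        exact ((hVbd u hu.1).1).symm
      · rw [extZ_pos n _ _ (by omega) (by omega) (by omega)]
        rw [hx]
        simp only
        congr 1
        have : ((((k:ℕ) - 1 : ℕ) : ℝ)) = (k:ℕ) - 1 := by
          push_cast [Nat.cast_sub (by omega : 1 ≤ (k:ℕ))]
          ring
        rw [this]
        ring
    have e2 : extZ n (fun j => V u (x j)) ((k:ℕ)+2) = V u (((k:ℕ)+2)/n) := by
      by_cases hk : (k:ℕ) + 2 ≤ n - 1
      · rw [extZ_pos n _ _ (by omega) hk (by omega)]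
        rw [hx]
        simp only
        congr 1
        push_cast
        ring
      · have hkn : (k:ℕ) + 2 = n := by omega
        rw [extZ_zero n _ _ (by omega)]
        have hcast : (((k:ℕ):ℝ) + 2)/(n:ℝ) = 1 := by
          rw [show ((k:ℕ):ℝ) + 2 = (n:ℝ) from by exact_mod_cast hkn]
          exact div_self hnR'
        rw [hcast]
        exact ((hVbd u hu.1).2).symm
    rw [e1, e2]
    have hxk : x k = (k:ℕ)/n + 1/n := by
      rw [hx]; simp only; ring
    have harg1 : (k:ℕ)/(n:ℝ) = ((k:ℕ)+1)/n - 1/n := by ring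
    have harg2 : ((k:ℕ)+2)/(n:ℝ) = ((k:ℕ)+1)/n + 1/n := by ring
    have hxk' : x k = ((k:ℕ)+1)/(n:ℝ) := by rw [hx]
    rw [hxk', harg1, harg2]
    have hbd := secdiff_bound hVx hVxx hMxx hu (by positivity : (0:ℝ) < 1/n)
      (by
        rw [← harg1]
        positivity)
      (by
        rw [← harg2]
        have hk2 : ((k:ℕ):ℝ) + 2 ≤ n := by
          have : (k:ℕ) + 2 ≤ n := by omega
          exact_mod_cast this
        rw [div_le_one hnR]
        linarith)
    calc |(n:ℝ)^2 * (V u (((k:ℕ)+1)/n - 1/n) - 2 * V u (((k:ℕ)+1)/n) + V u (((k:ℕ)+1)/n + 1/n))|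
        = (n:ℝ)^2 * |V u (((k:ℕ)+1)/n - 1/n) - 2 * V u (((k:ℕ)+1)/n) + V u (((k:ℕ)+1)/n + 1/n)| := by
          rw [abs_mul, abs_of_pos (by positivity : (0:ℝ) < (n:ℝ)^2)]
      _ ≤ (n:ℝ)^2 * (M₁ * (1/n)^2) := by
          apply mul_le_mul_of_nonneg_left hbd (by positivity)
      _ = M₁ := by field_simp
  have hGL : ∀ k, ∀ u ∈ Icc (0:ℝ) T, W k u = 0 → -L ≤ G k u := by
    intro k u hu hW0
    have hZk : Zn u k = -(V u (x k)) := by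
      rw [hW] at hW0
      simp only at hW0
      linarith
    have hmono := an_mulVec_mono n (Zn u) (fun j => -(V u (x j))) k
      (fun j => by
        have := hZV u hu.1 j
        simp only at this
        exact this)
      (by show Zn u k = -(V u (x k)); linarith)
    have hneg : (An n).mulVec (fun j => -(V u (x j))) k
        = -((An n).mulVec (fun j => V u (x j)) k) := by
      have : (fun j => -(V u (x j))) = -(fun j => V u (x j)) := rfl
      rw [this, Matrix.mulVec_neg]
      rfl
    rw [hneg] at hmono
    have habs := hAVbound u hu k
    have h1 : -M₁ ≤ (n:ℝ)^2 * (An n).mulVec (Zn u) k := by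
      have h2 : -((n:ℝ)^2 * (An n).mulVec (fun j => V u (x j)) k)
          ≤ (n:ℝ)^2 * (An n).mulVec (Zn u) k := by
        have := mul_le_mul_of_nonneg_left hmono (by positivity : (0:ℝ) ≤ (n:ℝ)^2)
        calc -((n:ℝ)^2 * (An n).mulVec (fun j => V u (x j)) k)
            = (n:ℝ)^2 * (-((An n).mulVec (fun j => V u (x j)) k)) := by ring
          _ ≤ (n:ℝ)^2 * (An n).mulVec (Zn u) k := this
      have h3 := neg_abs_le ((n:ℝ)^2 * (An n).mulVec (fun j => V u (x j)) k)
      linarith [abs_le.mp habs]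
    have h4 : -M₂ ≤ Vt u (x k) := by
      have := abs_le.mp (hMt u hu (x k) (hxIcc k))
      linarith [this.1]
    rw [hG]
    simp only
    rw [hLdef]
    linarith
  -- Lipschitz estimate for ηn k
  have hlip : ∀ k, ∀ s ∈ Icc (0:ℝ) T, ∀ t ∈ Icc (0:ℝ) T, s ≤ t →
      ηn k t - ηn k s ≤ L * (t - s) :=
    fun k => sk_lip hL (hWc k) (hGc k) (hinc k) (hηc k) (hsupp k) (hGL k)
  -- clamping
  set c : ℝ → ℝ := fun u => max 0 (min u T) with hc
  have hcmem : ∀ u, c u ∈ Icc (0:ℝ) T := by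
    intro u
    constructor
    · exact le_max_left _ _
    · exact max_le hT.le (min_le_right _ _)
  have hcid : ∀ u ∈ Icc (0:ℝ) T, c u = u := by
    intro u hu
    rw [hc]
    simp only
    rw [min_eq_left hu.2, max_eq_right hu.1]
  have hcmono : Monotone c := by
    intro a b hab
    exact max_le_max (le_refl 0) (min_le_min hab (le_refl T))
  have hclip : ∀ a b : ℝ, a ≤ b → c b - c a ≤ b - a := by
    intro a b hab
    rw [hc]
    simp only [min_def, max_def]
    split_ifs <;> linarith
  -- FTC for each k
  have hex : ∀ k, ∃ g : ℝ → ℝ, Measurable g ∧ (∀ u, 0 ≤ g u ∧ g u ≤ L) ∧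
      ∀ t : ℝ, 0 ≤ t → (ηn k (c t)) - (ηn k (c 0)) = ∫ u in (0:ℝ)..t, g u := by
    intro k
    apply lip_ftc hL
    · exact (ηn k).mono.comp hcmono
    · exact (hηc k).comp (continuous_const.max (continuous_id.min continuous_const))
    · intro s t hst
      have h1 := hlip k (c s) (hcmem s) (c t) (hcmem t) (hcmono hst)
      have h2 := hclip s t hst
      have h3 : L * (c t - c s) ≤ L * (t - s) := mul_le_mul_of_nonneg_left h2 hL
      linarith
  choose g hg1 hg2 hg3 using hex
  have hc0 : c 0 = 0 := by
    rw [hc]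
    simp only
    rw [min_eq_left hT.le, max_eq_right (le_refl 0)]
  have hrep : ∀ k, ∀ t ∈ Icc (0:ℝ) T, ηn k t = ∫ s in (0:ℝ)..t, g k s := by
    intro k t ht
    have := hg3 k t ht.1
    rw [hcid t ht, hc0, hη0 k] at this
    linarith
  have hgb : ∀ k u, ‖g k u‖ ≤ L := by
    intro k u
    rw [Real.norm_eq_abs, abs_of_nonneg (hg2 k u).1]
    exact (hg2 k u).2
  have hint1 : ∀ k, IntegrableOn (g k) (Icc 0 T) := by
    intro k
    apply Integrable.mono' (integrableOn_const (C := L) measure_Icc_lt_top.ne)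
      ((hg1 k).aestronglyMeasurable).restrict
    exact Filter.Eventually.of_forall (fun u => hgb k u)
  have hint2 : ∀ k, IntegrableOn (fun t => (g k t)^2) (Icc 0 T) := by
    intro k
    apply Integrable.mono' (integrableOn_const (C := L * L) measure_Icc_lt_top.ne)
      (((hg1 k).pow_const 2).aestronglyMeasurable).restrict
    apply Filter.Eventually.of_forall
    intro u
    rw [Real.norm_eq_abs, abs_of_nonneg (by positivity)]
    calc (g k u)^2 ≤ L^2 := by
          apply pow_le_pow_left₀ (hg2 k u).1 (hg2 k u).2
      _ = L * L := sq L
  refine ⟨g, hint1, hint2, hrep, ?_⟩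
  -- final estimate
  have hptb : ∀ t ∈ Icc (0:ℝ) T, ∑ k, (g k t)^2 ≤ (n:ℝ) * L^2 := by
    intro t _
    have hcard : (Finset.univ : Finset (Fin (n-1))).card = n - 1 := by
      simp
    calc ∑ k, (g k t)^2 ≤ ∑ _k : Fin (n-1), L^2 :=
          Finset.sum_le_sum (fun k _ => pow_le_pow_left₀ (hg2 k t).1 (hg2 k t).2 2)
      _ = ((n:ℕ) - 1 : ℕ) * L^2 := by
          rw [Finset.sum_const, hcard, nsmul_eq_mul]
      _ ≤ (n:ℝ) * L^2 := by
          apply mul_le_mul_of_nonneg_right _ (by positivity)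
          have : ((n - 1 : ℕ) : ℝ) ≤ (n:ℝ) := by
            have : (n - 1 : ℕ) ≤ n := by omega
            exact_mod_cast this
          exact this
  have hsint : IntervalIntegrable (fun t => ∑ k, (g k t)^2) volume 0 T := by
    rw [intervalIntegrable_iff_integrableOn_Icc_of_le hT.le]
    exact integrable_finset_sum _ (fun k _ => hint2 k)
  have hmain : (∫ t in (0:ℝ)..T, ∑ k, (g k t)^2) ≤ T * ((n:ℝ) * L^2) := by
    calc (∫ t in (0:ℝ)..T, ∑ k, (g k t)^2) ≤ ∫ _t in (0:ℝ)..T, (n:ℝ) * L^2 :=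
          intervalIntegral.integral_mono_on hT.le hsint intervalIntegrable_const hptb
      _ = T * ((n:ℝ) * L^2) := by
          rw [intervalIntegral.integral_const, smul_eq_mul, sub_zero]
  have hVtnn : 0 ≤ ∫ t in (0:ℝ)..T, ∑ k : Fin (n-1), (Vt t (((k : ℕ) + 1 : ℝ) / n))^2 := by
    apply intervalIntegral.integral_nonneg hT.le
    intro u _
    positivity
  have hC0 : (0:ℝ) < T * L^2 + 1 := by positivity
  have hfin : T * ((n:ℝ) * L^2) ≤ (T * L^2 + 1) *
      ((∫ t in (0:ℝ)..T, ∑ k : Fin (n-1), (Vt t (((k : ℕ) + 1 : ℝ) / n))^2) + n) := by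
    have hn0 : (0:ℝ) ≤ n := hnR.le
    nlinarith [mul_nonneg hC0.le hVtnn]
  exact hmain.trans hfin
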